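/- The Burnside R-algebra RB(G) of a finite group G is a separable R-algebra if and only if |G| is invertible in R. -/

import Mathlib

set_option linter.unusedSectionVars false

section Aux
variable {G : Type} [Group G] [Fintype G]

private lemma smul_fix_iff (K : Subgroup G) (g h : G) :
    h • (QuotientGroup.mk g : G ⧸ K) = QuotientGroup.mk g ↔ g⁻¹ * h * g ∈ K := by
  rw [MulAction.Quotient.smul_mk, QuotientGroup.eq, smul_eq_mul]
  have : (h * g)⁻¹ * g = (g⁻¹ * h * g)⁻¹ := by group
  rw [this, inv_mem_iff]

private lemma subconj_of_card_ne_zero {H K : Subgroup G}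
    (hc : Nat.card {x : G ⧸ K // ∀ h ∈ H, h • x = x} ≠ 0) :
    ∃ g : G, Subgroup.map (MulAut.conj g).toMonoidHom H ≤ K := by
  have hne : Nonempty {x : G ⧸ K // ∀ h ∈ H, h • x = x} := Nat.card_ne_zero.mp hc |>.1
  obtain ⟨x, hx⟩ := hne
  obtain ⟨g, rfl⟩ := QuotientGroup.mk_surjective x
  refine ⟨g⁻¹, ?_⟩
  rintro k ⟨h, hh, rfl⟩
  have := (smul_fix_iff K g h).mp (hx h hh)
  simpa using this

private lemma card_conj_map (H : Subgroup G) (g : G) :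
    Nat.card (Subgroup.map (MulAut.conj g).toMonoidHom H) = Nat.card H :=
  (Nat.card_congr ((MulAut.conj g).subgroupMap H).toEquiv).symm

private lemma fix_card_dvd (H : Subgroup G) :
    Nat.card {x : G ⧸ H // ∀ h ∈ H, h • x = x} ∣ Fintype.card G := by
  classical
  set N := Subgroup.normalizer (H : Set G) with hN
  have hmem : ∀ n : N, ∀ h ∈ H, h • (QuotientGroup.mk (n : G) : G ⧸ H) = QuotientGroup.mk (n : G) := by
    intro n h hh
    rw [smul_fix_iff]
    exact (Subgroup.mem_normalizer_iff''.mp n.2 h).mp hh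
  let f : N ⧸ (H.subgroupOf N) → {x : G ⧸ H // ∀ h ∈ H, h • x = x} :=
    Quotient.lift (fun n : N => ⟨QuotientGroup.mk (n : G), hmem n⟩)
      (by
        intro a b hab
        have h1 : a⁻¹ * b ∈ H.subgroupOf N := QuotientGroup.leftRel_apply.mp hab
        have h2 : (a : G)⁻¹ * (b : G) ∈ H := Subgroup.mem_subgroupOf.mp h1
        exact Subtype.ext (QuotientGroup.eq.mpr h2))
  have hbij : Function.Bijective f := by
    constructor
    · intro x y
      induction x using Quotient.ind
      induction y using Quotient.ind
      rename_i a b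
      intro hxy
      have h1 : (QuotientGroup.mk (a : G) : G ⧸ H) = QuotientGroup.mk (b : G) :=
        congrArg Subtype.val hxy
      have h2 : (a : G)⁻¹ * (b : G) ∈ H := QuotientGroup.eq.mp h1
      exact Quotient.sound (QuotientGroup.leftRel_apply.mpr
        (Subgroup.mem_subgroupOf.mpr h2))
    · rintro ⟨x, hx⟩
      obtain ⟨g, rfl⟩ := QuotientGroup.mk_surjective x
      have hle : Subgroup.map (MulAut.conj g⁻¹).toMonoidHom H ≤ H := by
        rintro k ⟨h, hh, rfl⟩
        simpa using (smul_fix_iff H g h).mp (hx h hh)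
      have heq : Subgroup.map (MulAut.conj g⁻¹).toMonoidHom H = H :=
        Subgroup.eq_of_le_of_card_ge hle (le_of_eq (card_conj_map H g⁻¹).symm)
      have hgN : g ∈ N := by
        rw [hN, ← inv_mem_iff]
        rw [Subgroup.mem_normalizer_iff]
        intro h
        constructor
        · intro hh
          have : (MulAut.conj g⁻¹) h ∈ H := heq ▸ Subgroup.mem_map_of_mem _ hh
          simpa using this
        · intro hh
          have hmem2 : g⁻¹ * h * (g⁻¹)⁻¹ ∈ Subgroup.map (MulAut.conj g⁻¹).toMonoidHom H := by
            rw [heq]; simpa using hh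
          obtain ⟨h', hh', hconj⟩ := hmem2
          have : h' = h := by
            have := hconj
            simp only [MulEquiv.coe_toMonoidHom, MulAut.conj_apply] at this
            exact mul_left_cancel (a := g⁻¹) (mul_right_cancel (b := (g⁻¹)⁻¹) this)
          rwa [← this]
      exact ⟨QuotientGroup.mk (⟨g, hgN⟩ : N), rfl⟩
  have hcard : Nat.card {x : G ⧸ H // ∀ h ∈ H, h • x = x} = Nat.card (N ⧸ (H.subgroupOf N)) :=
    (Nat.card_congr (Equiv.ofBijective f hbij)).symm
  rw [hcard, ← Nat.card_eq_fintype_card]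
  have h1 : Nat.card (N ⧸ (H.subgroupOf N)) ∣ Nat.card N :=
    Dvd.intro _ (Subgroup.card_eq_card_quotient_mul_card_subgroup (H.subgroupOf N)).symm
  have h2 : Nat.card N ∣ Nat.card G := Subgroup.card_subgroup_dvd_card N
  exact h1.trans h2

end Aux

open scoped TensorProduct

/-- The Burnside `R`-algebra `A = RB(G)` of a finite group `G` is separable (i.e. admits
`u ∈ A ⊗[R] A` with `a·u = u·a` for all `a` and `μ(u) = 1`) if and only if `|G|` is invertible
in `R`.  Here `RB(G)` is axiomatized by: an `R`-basis `ℬ i = [G/sG i]` indexed by a complete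
irredundant set `sG` of representatives of conjugacy classes of subgroups of `G`, with
`[G/G] = 1`, the mark algebra homomorphisms `Φ H` sending `[G/K]` to the number of `H`-fixed
points of `G/K`, and the multiplication rule `[G/1]·[G/H] = |G:H|·[G/1]`. -/
theorem burnside_algebra_separable_iff_card_isUnit
    {R : Type} [CommRing R] {G : Type} [Group G] [Fintype G]
    {A : Type} [CommRing A] [Algebra R A]
    {ι : Type} [Fintype ι] (sG : ι → Subgroup G) (ℬ : Module.Basis ι R A)
    (hreps : ∀ H : Subgroup G, ∃ (i : ι) (g : G),
      Subgroup.map (MulAut.conj g).toMonoidHom (sG i) = H)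
    (hirr : ∀ i j : ι,
      (∃ g : G, Subgroup.map (MulAut.conj g).toMonoidHom (sG i) = sG j) → i = j)
    (i0 itop : ι) (hi0 : sG i0 = ⊥) (hitop : sG itop = ⊤)
    (hone : ℬ itop = 1)
    (Φ : Subgroup G → (A →ₐ[R] R))
    (hΦ : ∀ (H : Subgroup G) (i : ι),
      Φ H (ℬ i) = (Nat.card {x : G ⧸ sG i // ∀ h ∈ H, h • x = x} : R))
    (hmul : ∀ i : ι, ℬ i0 * ℬ i = ((sG i).index : R) • ℬ i0) :
    (∃ u : A ⊗[R] A,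
        (∀ a : A, (a ⊗ₜ[R] (1 : A)) * u = u * ((1 : A) ⊗ₜ[R] a))
          ∧ LinearMap.mul' R A u = 1)
      ↔ IsUnit ((Fintype.card G : R)) := by
  constructor
  · rintro ⟨u, hu, hμ⟩
    classical
    set φ0 := Φ ⊥ with hφ0
    -- value of φ0 on basis elements
    have hφ0B : ∀ j : ι, φ0 (ℬ j) = ((sG j).index : R) := by
      intro j
      rw [hφ0, hΦ ⊥ j]
      congr 1
      have he : {x : G ⧸ sG j // ∀ h ∈ (⊥ : Subgroup G), h • x = x} ≃ (G ⧸ sG j) :=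
        Equiv.subtypeUnivEquiv (by
          intro x h hh
          rcases Subgroup.mem_bot.mp hh with rfl
          exact one_smul _ _)
      rw [Nat.card_congr he, Subgroup.index_eq_card]
    -- the algebra hom g : A ⊗ A → A, a ⊗ b ↦ φ0 a • b
    set g : A ⊗[R] A →ₐ[R] A :=
      ((Algebra.TensorProduct.lid R A : R ⊗[R] A ≃ₐ[R] A).toAlgHom.comp
        (Algebra.TensorProduct.map φ0 (AlgHom.id R A))) with hg
    have hg_tmul : ∀ (a b : A), g (a ⊗ₜ[R] b) = φ0 a • b := by
      intro a b
      simp [hg, Algebra.TensorProduct.lid_tmul]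
    set w : A := g u with hw
    -- step 1
    have step1 : ∀ a : A, φ0 a • w = w * a := by
      intro a
      have := congrArg g (hu a)
      rw [map_mul, map_mul, hg_tmul, hg_tmul] at this
      simpa [Algebra.smul_def, map_one] using this
    -- step 2 : φ0 w = 1
    have step2 : φ0 w = 1 := by
      have hlin : φ0.toLinearMap ∘ₗ g.toLinearMap = φ0.toLinearMap ∘ₗ LinearMap.mul' R A := by
        apply TensorProduct.ext'
        intro a b
        simp [hg_tmul, Algebra.smul_def, map_mul, LinearMap.mul'_apply]
      have := congrArg (fun f => f u) hlin
      simp only [LinearMap.comp_apply, AlgHom.toLinearMap_apply] at this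
      rw [hw, this, hμ, map_one]
    -- step 3 : ∀ a, a * ℬ i0 = φ0 a • ℬ i0
    have step3 : ∀ a : A, a * ℬ i0 = φ0 a • ℬ i0 := by
      have hmm : (LinearMap.mulRight R (ℬ i0) : A →ₗ[R] A)
          = (LinearMap.toSpanSingleton R A (ℬ i0)).comp φ0.toLinearMap := by
        apply ℬ.ext
        intro j
        simp only [LinearMap.mulRight_apply, LinearMap.comp_apply,
          AlgHom.toLinearMap_apply, LinearMap.toSpanSingleton_apply]
        rw [mul_comm, hmul j, hφ0B j]
      intro a
      have := congrArg (fun f => f a) hmm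
      simpa using this
    -- conclude
    have key : (Fintype.card G : R) • w = ℬ i0 := by
      have h1 : w * ℬ i0 = ℬ i0 := by rw [step3 w, step2, one_smul]
      have h2 : φ0 (ℬ i0) • w = w * ℬ i0 := step1 (ℬ i0)
      have h3 : φ0 (ℬ i0) = (Fintype.card G : R) := by
        rw [hφ0B i0, hi0, Subgroup.index_bot, Nat.card_eq_fintype_card]
      rw [← h1, ← h2, h3]
    have := congrArg (ℬ.coord i0) key
    simp only [map_smul, Module.Basis.coord_apply, Module.Basis.repr_self, Finsupp.single_eq_same,
      smul_eq_mul] at this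
    exact IsUnit.of_mul_eq_one _ this
  · intro hcard
    have hfixdvd : ∀ i : ι,
        Nat.card {x : G ⧸ sG i // ∀ h ∈ sG i, h • x = x} ∣ Fintype.card G :=
      fun i => fix_card_dvd (sG i)
    classical
    set Nmat : Matrix ι ι ℕ :=
      fun i j => Nat.card {x : G ⧸ sG j // ∀ h ∈ sG i, h • x = x} with hNmat
    set M : Matrix ι ι R := fun i j => ((Nmat i j : ℕ) : R) with hM
    -- triangularity key
    have hkey : ∀ i j : ι, Nmat i j ≠ 0 → i = j ∨ Nat.card (sG i) < Nat.card (sG j) := by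
      intro i j hne
      obtain ⟨g, hle⟩ := subconj_of_card_ne_zero hne
      have hcle : Nat.card (sG i) ≤ Nat.card (sG j) := by
        rw [← card_conj_map (sG i) g]
        exact Subgroup.card_le_of_le hle
      rcases eq_or_lt_of_le hcle with heq | hlt
      · left
        apply hirr i j
        exact ⟨g, Subgroup.eq_of_le_of_card_ge hle (le_of_eq ((card_conj_map (sG i) g).trans heq).symm)⟩
      · right; exact hlt
    -- diagonal entries are units
    have hdiagunit : ∀ i : ι, IsUnit (M i i) := by
      intro i
      exact isUnit_of_dvd_unit (Nat.cast_dvd_cast (hfixdvd i)) hcard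
    -- determinant of M is a unit, via sorting
    have hdet : IsUnit M.det := by
      set n := Fintype.card ι with hn
      set e0 : ι ≃ Fin n := Fintype.equivFin ι with he0
      set κ : Fin n → ℕ := fun k => Nat.card (sG (e0.symm k)) with hκ
      set σ : Equiv.Perm (Fin n) := Tuple.sort κ with hσ
      set e : ι ≃ Fin n := e0.trans σ⁻¹ with he
      have hmono : Monotone (κ ∘ σ) := Tuple.monotone_sort κ
      have hstrict : ∀ i j : ι, Nat.card (sG i) < Nat.card (sG j) → e i < e j := by
        intro i j hij
        have h1 : κ (σ (e i)) = Nat.card (sG i) := by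
          simp [he, hκ, he0]
        have h2 : κ (σ (e j)) = Nat.card (sG j) := by
          simp [he, hκ, he0]
        by_contra hcon
        push_neg at hcon
        have := hmono hcon
        simp only [Function.comp_apply] at this
        rw [h1, h2] at this
        omega
      have htri : (M.submatrix e.symm e.symm).BlockTriangular id := by
        intro k l hlt
        simp only [Matrix.submatrix_apply, id_eq] at *
        by_cases h0 : Nmat (e.symm k) (e.symm l) = 0
        · have hMval : M (e.symm k) (e.symm l) = ((Nmat (e.symm k) (e.symm l) : ℕ) : R) := rfl
          rw [hMval, h0, Nat.cast_zero]
        · rcases hkey _ _ h0 with heq | hlt2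
          · exfalso
            have : k = l := by
              have := congrArg e heq
              simpa using this
            omega
          · exfalso
            have := hstrict _ _ hlt2
            simp only [Equiv.apply_symm_apply] at this
            exact absurd hlt (not_lt_of_gt this)
      have hdet2 : (M.submatrix e.symm e.symm).det = ∏ k : Fin n, M (e.symm k) (e.symm k) := by
        rw [Matrix.det_of_upperTriangular htri]
        rfl
      have hdet3 : M.det = ∏ i : ι, M i i := by
        rw [← Matrix.det_submatrix_equiv_self e.symm M, hdet2]
        exact Fintype.prod_equiv e.symm (fun k => M (e.symm k) (e.symm k)) (fun i => M i i)
          (fun k => rfl)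
      rw [hdet3]
      exact Finset.prod_induction _ IsUnit (fun _ _ => IsUnit.mul) isUnit_one
        (fun i _ => hdiagunit i)
    -- the marks homomorphism into ι → R
    set Ψ : A →ₐ[R] (ι → R) := Pi.algHom R _ (fun i => Φ (sG i)) with hΨ
    have hΨmat : LinearMap.toMatrix ℬ (Pi.basisFun R ι) Ψ.toLinearMap = M := by
      funext i j
      rw [LinearMap.toMatrix_apply]
      simp only [Pi.basisFun_repr, AlgHom.toLinearMap_apply]
      show Ψ (ℬ j) i = M i j
      have h1 : Ψ (ℬ j) i = Φ (sG i) (ℬ j) := rfl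
      rw [h1, hΦ]
    have hdetM : IsUnit (LinearMap.toMatrix ℬ (Pi.basisFun R ι) Ψ.toLinearMap).det := by
      rw [hΨmat]; exact hdet
    have hbijΨ : Function.Bijective Ψ := by
      have hco : ⇑(LinearEquiv.ofIsUnitDet hdetM) = ⇑Ψ := by
        have h := LinearEquiv.coe_ofIsUnitDet hdetM
        exact congrArg (fun (f : A →ₗ[R] (ι → R)) => ⇑f) h
      rw [← hco]
      exact (LinearEquiv.ofIsUnitDet hdetM).bijective
    set Ψe : A ≃ₐ[R] (ι → R) := AlgEquiv.ofBijective Ψ hbijΨ with hΨe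
    set T := Algebra.TensorProduct.congr Ψe Ψe with hT
    set S : (ι → R) ⊗[R] (ι → R) :=
      ∑ i : ι, (Pi.single i (1:R)) ⊗ₜ[R] (Pi.single i (1:R)) with hS
    have hsm : ∀ (b : ι → R) (i : ι), b * Pi.single i 1 = Pi.single i (b i) := by
      intro b i; funext j
      by_cases h : j = i
      · subst h; simp
      · simp [Pi.single_eq_of_ne h]
    refine ⟨T.symm S, ?_, ?_⟩
    · intro a
      apply T.injective
      rw [map_mul, map_mul, T.apply_symm_apply]
      have hT1 : T (a ⊗ₜ[R] (1:A)) = (Ψe a) ⊗ₜ[R] (1 : ι → R) := by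
        rw [hT, Algebra.TensorProduct.congr_apply, Algebra.TensorProduct.map_tmul]
        simp
      have hT2 : T ((1:A) ⊗ₜ[R] a) = (1 : ι → R) ⊗ₜ[R] (Ψe a) := by
        rw [hT, Algebra.TensorProduct.congr_apply, Algebra.TensorProduct.map_tmul]
        simp
      rw [hT1, hT2, hS, Finset.mul_sum, Finset.sum_mul]
      refine Finset.sum_congr rfl (fun i _ => ?_)
      rw [Algebra.TensorProduct.tmul_mul_tmul, Algebra.TensorProduct.tmul_mul_tmul,
        one_mul, mul_one, hsm (Ψe a) i, mul_comm _ (Ψe a), hsm (Ψe a) i]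
      have hc : ∀ c : R, (Pi.single i c : ι → R) = c • (Pi.single i (1:R) : ι → R) := by
        intro c; funext j; by_cases h : j = i
        · subst h; simp
        · simp [Pi.single_eq_of_ne h]
      rw [hc, TensorProduct.smul_tmul, ← hc]
    · have hμT : ∀ (x y : ι → R),
          LinearMap.mul' R A (T.symm (x ⊗ₜ[R] y)) = Ψe.symm (x * y) := by
        intro x y
        rw [hT, Algebra.TensorProduct.congr_symm_apply, Algebra.TensorProduct.map_tmul,
          LinearMap.mul'_apply]
        exact (map_mul Ψe.symm x y).symm
      calc LinearMap.mul' R A (T.symm S)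
          = ∑ i : ι, LinearMap.mul' R A (T.symm ((Pi.single i 1) ⊗ₜ[R] (Pi.single i 1))) := by
            rw [hS, map_sum, map_sum]
        _ = ∑ i : ι, Ψe.symm (Pi.single i 1 * Pi.single i 1) :=
            Finset.sum_congr rfl fun i _ => hμT _ _
        _ = Ψe.symm 1 := by
            rw [← map_sum]
            congr 1
            have hss : ∀ i : ι, (Pi.single i (1:R) : ι → R) * Pi.single i 1 = Pi.single i 1 := by
              intro i; rw [hsm, Pi.single_eq_same]
            simp_rw [hss]
            exact Finset.univ_sum_single (1 : ι → R)
        _ = 1 := map_one _
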